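/- Let R be a commutative semihyperring with a multiplicative identity 1. Then the following are equivalent: (1) R is multiplicatively regular, i.e., for every a ∈ R there exists b ∈ R with a = a·b·a; (2) every hyperideal I of R is idempotent, i.e., I = II; (3) I ∩ J = IJ for all hyperideals I and J of R; (4) every hyperideal of R is semiprime. -/

import Mathlib

/-- A semihyperring `(R, +, ·, 0)`: `+` is a hyperoperation (into nonempty sets),
`·` is an associative single-valued multiplication distributing over `+`,
and `0` is an additive identity and multiplicative absorbing element. -/
class Semihyperring (R : Type*) extends Mul R, Zero R where
  /-- hyperaddition -/
  hadd : R → R → Set R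
  hadd_nonempty : ∀ a b : R, (hadd a b).Nonempty
  hadd_comm : ∀ a b : R, hadd a b = hadd b a
  hadd_assoc : ∀ a b c : R, (⋃ x ∈ hadd a b, hadd x c) = ⋃ x ∈ hadd b c, hadd a x
  hadd_zero : ∀ a : R, hadd a 0 = {a}
  mul_assoc' : ∀ a b c : R, a * b * c = a * (b * c)
  left_distrib' : ∀ a b c : R, (fun x => a * x) '' hadd b c = hadd (a * b) (a * c)
  right_distrib' : ∀ a b c : R, (fun x => x * c) '' hadd a b = hadd (a * c) (b * c)
  mul_zero' : ∀ a : R, a * 0 = 0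
  zero_mul' : ∀ a : R, 0 * a = 0

namespace Semihyperring

variable {R : Type*} [Semihyperring R]

/-- Hyperaddition extended to sets: `A + B = ⋃_{a∈A, b∈B} (a + b)`. -/
def hAddSet (A B : Set R) : Set R := ⋃ a ∈ A, ⋃ b ∈ B, hadd a b

/-- The hypersum `x₁ + x₂ + ⋯ + xₙ` of a list of elements (as a set);
the empty hypersum is `{0}`, so `hSum [x] = {x}`. -/
def hSum : List R → Set R
  | [] => {0}
  | x :: xs => hAddSet {x} (hSum xs)

/-- A left hyperideal. -/
def IsLeftHyperideal (I : Set R) : Prop :=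
  I.Nonempty ∧ (∀ a ∈ I, ∀ b ∈ I, hadd a b ⊆ I) ∧ ∀ a ∈ I, ∀ r : R, r * a ∈ I

/-- A right hyperideal. -/
def IsRightHyperideal (I : Set R) : Prop :=
  I.Nonempty ∧ (∀ a ∈ I, ∀ b ∈ I, hadd a b ⊆ I) ∧ ∀ a ∈ I, ∀ r : R, a * r ∈ I

/-- A (two-sided) hyperideal. -/
def IsHyperideal (I : Set R) : Prop :=
  I.Nonempty ∧ (∀ a ∈ I, ∀ b ∈ I, hadd a b ⊆ I) ∧ ∀ a ∈ I, ∀ r : R, r * a ∈ I ∧ a * r ∈ I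

/-- The product `HK`: union of all finite hypersums `a₁·b₁ + ⋯ + aₙ·bₙ` (n ≥ 1)
with `aᵢ ∈ H`, `bᵢ ∈ K`. -/
def hProd (H K : Set R) : Set R :=
  ⋃ (l : List (R × R)) (_ : l ≠ []) (_ : ∀ p ∈ l, p.1 ∈ H ∧ p.2 ∈ K),
    hSum (l.map fun p => p.1 * p.2)

/-- The hyperideal generated by an element. -/
def genHyperideal (a : R) : Set R := ⋂₀ {I : Set R | IsHyperideal I ∧ a ∈ I}

/-- A prime hyperideal. -/
def IsPrimeHyperideal (P : Set R) : Prop :=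
  IsHyperideal P ∧
    ∀ A B : Set R, IsHyperideal A → IsHyperideal B → hProd A B ⊆ P → A ⊆ P ∨ B ⊆ P

/-- A semiprime hyperideal. -/
def IsSemiprimeHyperideal (I : Set R) : Prop :=
  IsHyperideal I ∧ ∀ H : Set R, IsHyperideal H → hProd H H ⊆ I → H ⊆ I

/-- A strongly irreducible hyperideal. -/
def IsStronglyIrreducibleHyperideal (I : Set R) : Prop :=
  IsHyperideal I ∧
    ∀ H K : Set R, IsHyperideal H → IsHyperideal K → H ∩ K ⊆ I → H ⊆ I ∨ K ⊆ I

/-- An irreducible hyperideal. -/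
def IsIrreducibleHyperideal (I : Set R) : Prop :=
  IsHyperideal I ∧
    ∀ H K : Set R, IsHyperideal H → IsHyperideal K → I = H ∩ K → I = H ∨ I = K

/-- `a·R`: the union of all finite hypersums `a·r₁ + ⋯ + a·rₙ` (n ≥ 1) with `rᵢ ∈ R`. -/
def rightMulSet (a : R) : Set R :=
  ⋃ (l : List R) (_ : l ≠ []), hSum (l.map fun r => a * r)

end Semihyperring
namespace Semihyperring

variable {R : Type*} [Semihyperring R]

lemma mem_hAddSet {A B : Set R} {z : R} :
    z ∈ hAddSet A B ↔ ∃ a ∈ A, ∃ b ∈ B, z ∈ hadd a b := by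
  simp [hAddSet]

lemma hadd_subset_hAddSet {A B : Set R} {a b : R} (ha : a ∈ A) (hb : b ∈ B) :
    hadd a b ⊆ hAddSet A B :=
  fun z hz => mem_hAddSet.2 ⟨a, ha, b, hb, hz⟩

lemma zero_hAddSet (B : Set R) : hAddSet {0} B = B := by
  ext z
  simp only [mem_hAddSet, Set.mem_singleton_iff]
  constructor
  · rintro ⟨a, rfl, b, hb, hz⟩
    rw [hadd_comm, hadd_zero] at hz
    rwa [Set.mem_singleton_iff.1 hz]
  · intro hz
    exact ⟨0, rfl, z, hz, by rw [hadd_comm, hadd_zero]; rfl⟩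

lemma hAddSet_assoc (A B C : Set R) :
    hAddSet (hAddSet A B) C = hAddSet A (hAddSet B C) := by
  ext z
  simp only [mem_hAddSet]
  constructor
  · rintro ⟨x, ⟨a, ha, b, hb, hx⟩, c, hc, hz⟩
    have h : z ∈ ⋃ t ∈ hadd a b, hadd t c := Set.mem_biUnion hx hz
    rw [hadd_assoc] at h
    obtain ⟨t, ht, hz'⟩ := Set.mem_iUnion₂.1 h
    exact ⟨a, ha, t, ⟨b, hb, c, hc, ht⟩, hz'⟩
  · rintro ⟨a, ha, x, ⟨b, hb, c, hc, hx⟩, hz⟩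
    have h : z ∈ ⋃ t ∈ hadd b c, hadd a t := Set.mem_biUnion hx hz
    rw [← hadd_assoc] at h
    obtain ⟨t, ht, hz'⟩ := Set.mem_iUnion₂.1 h
    exact ⟨t, ⟨a, ha, b, hb, ht⟩, c, hc, hz'⟩

lemma hSum_cons (x : R) (L : List R) : hSum (x :: L) = hAddSet {x} (hSum L) := rfl

lemma hSum_append (L₁ L₂ : List R) :
    hSum (L₁ ++ L₂) = hAddSet (hSum L₁) (hSum L₂) := by
  induction L₁ with
  | nil => simp [hSum, zero_hAddSet]
  | cons x xs ih =>
    rw [List.cons_append, hSum_cons, ih, hSum_cons, hAddSet_assoc]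

lemma hSum_singleton (x : R) : hSum [x] = {x} := by
  rw [hSum_cons]
  show hAddSet {x} {0} = {x}
  ext z
  simp only [mem_hAddSet, Set.mem_singleton_iff]
  constructor
  · rintro ⟨a, rfl, b, rfl, hz⟩
    rwa [hadd_zero] at hz
  · intro hz
    exact ⟨x, rfl, 0, rfl, by rw [hadd_zero]; exact hz⟩

lemma image_hAddSet_right (c : R) (A B : Set R) :
    (fun x => x * c) '' hAddSet A B
      = hAddSet ((fun x => x * c) '' A) ((fun x => x * c) '' B) := by
  ext z
  simp only [Set.mem_image, mem_hAddSet]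
  constructor
  · rintro ⟨w, ⟨a, ha, b, hb, hw⟩, rfl⟩
    refine ⟨a * c, ⟨a, ha, rfl⟩, b * c, ⟨b, hb, rfl⟩, ?_⟩
    rw [← right_distrib']
    exact ⟨w, hw, rfl⟩
  · rintro ⟨_, ⟨a, ha, rfl⟩, _, ⟨b, hb, rfl⟩, hz⟩
    rw [← right_distrib'] at hz
    obtain ⟨w, hw, rfl⟩ := hz
    exact ⟨w, ⟨a, ha, b, hb, hw⟩, rfl⟩

lemma image_hAddSet_left (c : R) (A B : Set R) :
    (fun x => c * x) '' hAddSet A B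
      = hAddSet ((fun x => c * x) '' A) ((fun x => c * x) '' B) := by
  ext z
  simp only [Set.mem_image, mem_hAddSet]
  constructor
  · rintro ⟨w, ⟨a, ha, b, hb, hw⟩, rfl⟩
    refine ⟨c * a, ⟨a, ha, rfl⟩, c * b, ⟨b, hb, rfl⟩, ?_⟩
    rw [← left_distrib']
    exact ⟨w, hw, rfl⟩
  · rintro ⟨_, ⟨a, ha, rfl⟩, _, ⟨b, hb, rfl⟩, hz⟩
    rw [← left_distrib'] at hz
    obtain ⟨w, hw, rfl⟩ := hz
    exact ⟨w, ⟨a, ha, b, hb, hw⟩, rfl⟩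

lemma hSum_map_mulRight (c : R) (L : List R) :
    hSum (L.map fun x => x * c) = (fun x => x * c) '' hSum L := by
  induction L with
  | nil => simp [hSum, zero_mul']
  | cons x xs ih =>
    rw [List.map_cons, hSum_cons, ih, hSum_cons, image_hAddSet_right,
      Set.image_singleton]

lemma hSum_map_mulLeft (c : R) (L : List R) :
    hSum (L.map fun x => c * x) = (fun x => c * x) '' hSum L := by
  induction L with
  | nil => simp [hSum, mul_zero']
  | cons x xs ih =>
    rw [List.map_cons, hSum_cons, ih, hSum_cons, image_hAddSet_left,
      Set.image_singleton]

lemma zero_mem {I : Set R} (hI : IsHyperideal I) : 0 ∈ I := by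
  obtain ⟨⟨x, hx⟩, _, hmul⟩ := hI
  have h := (hmul x hx 0).1
  rwa [zero_mul'] at h

lemma hSum_subset {I : Set R} (hI : IsHyperideal I) :
    ∀ {L : List R}, (∀ x ∈ L, x ∈ I) → hSum L ⊆ I := by
  intro L
  induction L with
  | nil => intro _ z hz; rw [hSum] at hz; rw [Set.mem_singleton_iff.1 hz]; exact zero_mem hI
  | cons x xs ih =>
    intro h z hz
    rw [hSum_cons] at hz
    obtain ⟨a, ha, b, hb, hz⟩ := mem_hAddSet.1 hz
    rw [Set.mem_singleton_iff.1 ha] at hz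
    exact hI.2.1 x (h x List.mem_cons_self) b
      (ih (fun y hy => h y (List.mem_cons_of_mem x hy)) hb) hz

lemma mem_hProd_iff {H K : Set R} {z : R} :
    z ∈ hProd H K ↔ ∃ l : List (R × R), l ≠ [] ∧ (∀ p ∈ l, p.1 ∈ H ∧ p.2 ∈ K) ∧
      z ∈ hSum (l.map fun p => p.1 * p.2) := by
  simp only [hProd, Set.mem_iUnion]
  tauto

lemma mem_hProd_of_mul {H K : Set R} {a b : R} (ha : a ∈ H) (hb : b ∈ K) :
    a * b ∈ hProd H K := by
  refine mem_hProd_iff.2 ⟨[(a, b)], by simp, by simp [ha, hb], ?_⟩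
  simp [hSum_singleton]

lemma hProd_subset {I J K : Set R} (hK : IsHyperideal K)
    (h : ∀ a ∈ I, ∀ b ∈ J, a * b ∈ K) : hProd I J ⊆ K := by
  intro z hz
  obtain ⟨l, _, hl, hz⟩ := mem_hProd_iff.1 hz
  refine hSum_subset hK ?_ hz
  intro x hx
  obtain ⟨p, hp, rfl⟩ := List.mem_map.1 hx
  exact h p.1 (hl p hp).1 p.2 (hl p hp).2

lemma IsHyperideal.inter {I J : Set R} (hI : IsHyperideal I) (hJ : IsHyperideal J) :
    IsHyperideal (I ∩ J) := by
  refine ⟨⟨0, zero_mem hI, zero_mem hJ⟩, ?_, ?_⟩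
  · intro a ha b hb
    exact Set.subset_inter (hI.2.1 a ha.1 b hb.1) (hJ.2.1 a ha.2 b hb.2)
  · intro a ha r
    exact ⟨⟨(hI.2.2 a ha.1 r).1, (hJ.2.2 a ha.2 r).1⟩, ⟨(hI.2.2 a ha.1 r).2, (hJ.2.2 a ha.2 r).2⟩⟩

lemma mem_rightMulSet_iff {a z : R} :
    z ∈ rightMulSet a ↔ ∃ l : List R, l ≠ [] ∧ z ∈ hSum (l.map fun r => a * r) := by
  simp [rightMulSet]

end Semihyperring
open Semihyperring

/-- characterizations of multiplicatively regular commutative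
semihyperrings with identity. -/
theorem regular_tfae {R : Type*} [Semihyperring R]
    (one : R) (hone : ∀ x : R, one * x = x ∧ x * one = x)
    (hcomm : ∀ x y : R, x * y = y * x) :
    List.TFAE [
      ∀ a : R, ∃ b : R, a = a * b * a,
      ∀ I : Set R, IsHyperideal I → I = hProd I I,
      ∀ I J : Set R, IsHyperideal I → IsHyperideal J → I ∩ J = hProd I J,
      ∀ I : Set R, IsHyperideal I → IsSemiprimeHyperideal I ] := by
  tfae_have 1 → 3 := by
    intro h1 I J hI hJ
    refine Set.Subset.antisymm ?_ (hProd_subset (hI.inter hJ)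
      fun a ha b hb => ⟨(hI.2.2 a ha b).2, (hJ.2.2 b hb a).1⟩)
    intro x hx
    obtain ⟨b, hb⟩ := h1 x
    rw [hb]
    exact mem_hProd_of_mul (hI.2.2 x hx.1 b).2 hx.2
  tfae_have 3 → 2 := by
    intro h3 I hI
    rw [← h3 I I hI hI, Set.inter_self]
  tfae_have 2 → 4 := by
    intro h2 I hI
    exact ⟨hI, fun H hH hsub => (h2 H hH) ▸ hsub⟩
  tfae_have 4 → 1 := by
    intro h4 a
    set T : Set R := Set.range fun b => a * b * a with hTdef
    set S : Set R := Set.range fun u => a * u with hSdef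
    have haddT : ∀ b₁ b₂ : R,
        hadd (a * b₁ * a) (a * b₂ * a) = (fun w => a * w * a) '' hadd b₁ b₂ := by
      intro b₁ b₂
      rw [← right_distrib' (a * b₁) (a * b₂) a, ← left_distrib' a b₁ b₂, ← Set.image_comp]
      rfl
    have hT : IsHyperideal T := by
      refine ⟨⟨0, 0, ?_⟩, ?_, ?_⟩
      · show a * 0 * a = 0
        rw [mul_zero', zero_mul']
      · rintro x ⟨b₁, rfl⟩ y ⟨b₂, rfl⟩
        rw [haddT]
        rintro z ⟨w, _, rfl⟩
        exact ⟨w, rfl⟩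
      · rintro x ⟨b, rfl⟩ r
        have key : (a * b * a) * r = a * (b * r) * a := by
          rw [mul_assoc' (a * b) a r, hcomm a r, ← mul_assoc' (a * b) r a, mul_assoc' a b r]
        constructor
        · rw [hcomm r, key]; exact ⟨b * r, rfl⟩
        · rw [key]; exact ⟨b * r, rfl⟩
    have hS : IsHyperideal S := by
      refine ⟨⟨a, one, (hone a).2⟩, ?_, ?_⟩
      · rintro x ⟨u, rfl⟩ y ⟨v, rfl⟩
        show hadd (a * u) (a * v) ⊆ S
        rw [← left_distrib' a u v]
        rintro z ⟨w, _, rfl⟩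
        exact ⟨w, rfl⟩
      · rintro x ⟨u, rfl⟩ r
        have hxr : (a * u) * r ∈ S := ⟨u * r, (mul_assoc' a u r).symm⟩
        exact ⟨by rw [hcomm r]; exact hxr, hxr⟩
    have hprod : hProd S S ⊆ T := by
      refine hProd_subset hT ?_
      rintro x ⟨u, rfl⟩ y ⟨v, rfl⟩
      refine ⟨u * v, ?_⟩
      show a * (u * v) * a = (a * u) * (a * v)
      rw [hcomm a v, ← mul_assoc' (a * u) v a, mul_assoc' a u v]
    obtain ⟨b, hb⟩ := (h4 T hT).2 S hS hprod ⟨one, (hone a).2⟩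
    exact ⟨b, hb.symm⟩
  tfae_finish
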